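/- Let r ≤ a be positive integers. Then the identity C(a,r) − 1 + Σ_{α=1}^{a−r} C(α+r−2, α)·α = (a−r+1)·C(a−1, r−1) − 1 holds. -/
import Mathlib

lemma binomial_identity_key (s n : ℕ) :
    (n + s + 1).choose (s + 1) + ∑ β ∈ Finset.range n, (β + s).choose (β + 1) * (β + 1)
      = (n + 1) * (n + s).choose s := by
  induction n with
  | zero => simp
  | succ n ih =>
    rw [Finset.sum_range_succ]
    have pascal : (n + s + 1 + 1).choose (s + 1)
        = (n + s + 1).choose s + (n + s + 1).choose (s + 1) := by
      exact Nat.choose_succ_succ _ _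
    have h2 : (n + s).choose (n + 1) + (n + s).choose s = (n + s + 1).choose s := by
      match s with
      | 0 => simp [Nat.choose_eq_zero_of_lt (Nat.lt_succ_self n)]
      | t + 1 =>
        have hsym : (n + (t + 1)).choose (n + 1) = (n + (t + 1)).choose t := by
          have := Nat.choose_symm (n := n + (t + 1)) (k := n + 1) (by omega)
          simpa [show n + (t + 1) - (n + 1) = t by omega] using this.symm
        rw [hsym]
        exact (Nat.choose_succ_succ _ _).symm
    rw [show n + 1 + s = n + s + 1 by ring]
    zify at pascal ih h2 ⊢
    linear_combination pascal + ih + ((n : ℤ) + 1) * h2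

theorem binomial_identity (r a : ℕ) (hr : 1 ≤ r) (hra : r ≤ a) :
    a.choose r - 1 + ∑ α ∈ Finset.Icc 1 (a - r), (α + r - 2).choose α * α =
      (a - r + 1) * (a - 1).choose (r - 1) - 1 := by
  obtain ⟨s, rfl⟩ : ∃ s, r = s + 1 := ⟨r - 1, by omega⟩
  obtain ⟨n, rfl⟩ : ∃ n, a = n + s + 1 := ⟨a - s - 1, by omega⟩
  have hsum : ∑ α ∈ Finset.Icc 1 (n + s + 1 - (s + 1)), (α + (s + 1) - 2).choose α * α
      = ∑ β ∈ Finset.range n, (β + s).choose (β + 1) * (β + 1) := by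
    rw [show n + s + 1 - (s + 1) = n by omega, ← Finset.Ico_add_one_right_eq_Icc,
      Finset.sum_Ico_eq_sum_range]
    simp only [show n + 1 - 1 = n from rfl]
    apply Finset.sum_congr (by simp)
    intro i _
    rw [show 1 + i + (s + 1) - 2 = i + s by omega, Nat.add_comm 1 i]
  have key := binomial_identity_key s n
  have hpos : 1 ≤ (n + s + 1).choose (s + 1) := Nat.choose_pos (by omega)
  rw [hsum]
  rw [show n + s + 1 - (s + 1) = n by omega, show n + s + 1 - 1 = n + s by omega,
    show s + 1 - 1 = s by omega]
  omega
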